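/- There exist two simple graphs on vertex set Fin 10 that are not isomorphic but have the same bivariate permanent polynomial. -/

import Mathlib

open scoped Classical

/-- The permanent of a square matrix: `per(M) = ∑_σ ∏_i M i (σ i)`. -/
noncomputable def permanent {n : Type*} [DecidableEq n] [Fintype n] {R : Type*} [CommRing R]
    (M : Matrix n n R) : R :=
  ∑ σ : Equiv.Perm n, ∏ i, M i (σ i)

/-- The bivariate permanent polynomial of a simple graph `G` on `Fin n`:
`P(G; x, λ) = per(x • Iₙ + λ • A(G) + A(Ḡ))`, as an element of `ℤ[x, λ]`
(realized as `MvPolynomial (Fin 2) ℤ`, with `X 0 = x` and `X 1 = λ`). -/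
noncomputable def bivPermPoly {n : ℕ} (G : SimpleGraph (Fin n)) : MvPolynomial (Fin 2) ℤ :=
  permanent
    ((MvPolynomial.X 0 : MvPolynomial (Fin 2) ℤ) • (1 : Matrix (Fin n) (Fin n) (MvPolynomial (Fin 2) ℤ))
      + (MvPolynomial.X 1 : MvPolynomial (Fin 2) ℤ) • G.adjMatrix (MvPolynomial (Fin 2) ℤ)
      + Gᶜ.adjMatrix (MvPolynomial (Fin 2) ℤ))

open Finset

namespace BivAux

lemma permanent_map {n : Type*} [DecidableEq n] [Fintype n] {R S : Type*} [CommRing R]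
    [CommRing S] (f : R →+* S) (M : Matrix n n R) :
    f (permanent M) = permanent (fun i j => f (M i j)) := by
  unfold permanent
  rw [map_sum]
  exact Finset.sum_congr rfl fun σ _ => by rw [map_prod]

section Ryser
variable {R : Type*} [CommRing R]

lemma alt_sum {α : Type*} [DecidableEq α] (s : Finset α) :
    ∑ U ∈ s.powerset, (-1 : R) ^ U.card = if s = ∅ then 1 else 0 := by
  induction s using Finset.induction_on with
  | empty => simp
  | @insert a s ha ih =>
    rw [Finset.sum_powerset_insert ha]
    have h2 : ∑ U ∈ s.powerset, (-1 : R) ^ (insert a U).card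
        = ∑ U ∈ s.powerset, (-(-1 : R) ^ U.card) := by
      refine Finset.sum_congr rfl fun U hU => ?_
      rw [Finset.card_insert_of_notMem (fun h => ha (Finset.mem_powerset.mp hU h)), pow_succ]
      ring
    rw [h2]
    simp [ih, Finset.insert_ne_empty]

lemma key_sum {n : ℕ} (T : Finset (Fin n)) :
    ∑ S ∈ (univ : Finset (Fin n)).powerset.filter (fun S => T ⊆ S), (-1 : R) ^ (n - S.card)
      = if T = univ then 1 else 0 := by
  have hbij : ∑ S ∈ (univ : Finset (Fin n)).powerset.filter (fun S => T ⊆ S),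
      (-1 : R) ^ (n - S.card) = ∑ U ∈ (univ \ T).powerset, (-1 : R) ^ U.card := by
    refine Finset.sum_nbij' (fun S => univ \ S) (fun U => univ \ U) ?_ ?_ ?_ ?_ ?_
    · intro S hS
      simp only [Finset.mem_filter, Finset.mem_powerset] at hS
      exact Finset.mem_powerset.mpr (Finset.sdiff_subset_sdiff le_rfl hS.2)
    · intro U hU
      simp only [Finset.mem_powerset] at hU
      refine Finset.mem_filter.mpr ⟨Finset.mem_powerset.mpr (Finset.sdiff_subset), ?_⟩
      intro x hx
      simp only [Finset.mem_sdiff, Finset.mem_univ, true_and]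
      intro hxU
      exact (Finset.mem_sdiff.mp (hU hxU)).2 hx
    · intro S hS
      simp only [Finset.mem_filter, Finset.mem_powerset] at hS
      exact Finset.sdiff_sdiff_eq_self hS.1
    · intro U hU
      exact Finset.sdiff_sdiff_eq_self (Finset.subset_univ U)
    · intro S hS
      congr 1
      rw [Finset.card_sdiff_of_subset (Finset.subset_univ S), Finset.card_univ, Fintype.card_fin]
  rw [hbij, alt_sum]
  congr 1
  simp only [Finset.sdiff_eq_empty_iff_subset, eq_iff_iff]
  exact ⟨fun h => Finset.eq_univ_iff_forall.mpr (fun x => h (Finset.mem_univ x)),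
    fun h => h ▸ le_rfl⟩

theorem permanent_ryser {n : ℕ} (M : Matrix (Fin n) (Fin n) R) :
    permanent M
      = ∑ S ∈ (univ : Finset (Fin n)).powerset, (-1 : R) ^ (n - S.card) * ∏ i, ∑ j ∈ S, M i j := by
  have h1 : ∀ S : Finset (Fin n), (∏ i, ∑ j ∈ S, M i j)
      = ∑ g ∈ Fintype.piFinset (fun _ : Fin n => S), ∏ i, M i (g i) := by
    intro S
    exact Finset.prod_univ_sum _ _
  have h2 : ∀ S : Finset (Fin n),
      Fintype.piFinset (fun _ : Fin n => S)
        = (univ : Finset (Fin n → Fin n)).filter (fun g => Finset.image g univ ⊆ S) := by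
    intro S
    ext g
    simp [Fintype.mem_piFinset, Finset.image_subset_iff]
  calc permanent M
      = ∑ g ∈ (univ : Finset (Fin n → Fin n)).filter (fun g => Finset.image g univ = univ),
          ∏ i, M i (g i) := by
        unfold permanent
        refine Finset.sum_nbij (i := fun (σ : Equiv.Perm (Fin n)) => (σ : Fin n → Fin n))
          ?_ ?_ ?_ ?_
        · intro σ _
          refine Finset.mem_filter.mpr ⟨Finset.mem_univ _, ?_⟩
          ext x
          simp only [Finset.mem_image, Finset.mem_univ, true_and, iff_true]
          exact ⟨σ.symm x, σ.apply_symm_apply x⟩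
        · intro σ1 _ σ2 _ h
          exact Equiv.coe_fn_injective h
        · intro g hg
          have hg' : Finset.image g univ = univ := by
            have := Finset.mem_coe.mp hg
            exact (Finset.mem_filter.mp this).2
          have hsurj : Function.Surjective g := by
            intro y
            have hy : y ∈ Finset.image g univ := by rw [hg']; exact Finset.mem_univ y
            obtain ⟨x, _, hx⟩ := Finset.mem_image.mp hy
            exact ⟨x, hx⟩
          have hbij : Function.Bijective g := Finite.surjective_iff_bijective.mp hsurj
          exact ⟨Equiv.ofBijective g hbij, by simp, rfl⟩
        · intro σ _
          rfl
    _ = ∑ g : Fin n → Fin n, (if Finset.image g univ = univ then 1 else 0) * ∏ i, M i (g i) := by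
        rw [Finset.sum_filter]
        refine Finset.sum_congr rfl fun g _ => ?_
        split <;> simp
    _ = ∑ g : Fin n → Fin n,
          (∑ S ∈ (univ : Finset (Fin n)).powerset.filter (fun S => Finset.image g univ ⊆ S),
            (-1 : R) ^ (n - S.card)) * ∏ i, M i (g i) := by
        refine Finset.sum_congr rfl fun g _ => ?_
        rw [key_sum (R := R) (Finset.image g univ)]
    _ = ∑ g : Fin n → Fin n, ∑ S ∈ (univ : Finset (Fin n)).powerset,
          (if Finset.image g univ ⊆ S then (-1 : R) ^ (n - S.card) * ∏ i, M i (g i) else 0) := by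
        refine Finset.sum_congr rfl fun g _ => ?_
        rw [Finset.sum_filter, Finset.sum_mul]
        refine Finset.sum_congr rfl fun S _ => ?_
        split <;> simp
    _ = ∑ S ∈ (univ : Finset (Fin n)).powerset, ∑ g : Fin n → Fin n,
          (if Finset.image g univ ⊆ S then (-1 : R) ^ (n - S.card) * ∏ i, M i (g i) else 0) :=
        Finset.sum_comm
    _ = ∑ S ∈ (univ : Finset (Fin n)).powerset, (-1 : R) ^ (n - S.card) * ∏ i, ∑ j ∈ S, M i j := by
        refine Finset.sum_congr rfl fun S _ => ?_
        rw [h1 S, h2 S, Finset.mul_sum, Finset.sum_filter]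

end Ryser

variable {n : ℕ} (G : SimpleGraph (Fin n))

/-- number of fixed points -/
noncomputable def aCt (σ : Equiv.Perm (Fin n)) : ℕ := (univ.filter fun i => i = σ i).card

/-- number of non-fixed G-edges traversed -/
noncomputable def bCt (σ : Equiv.Perm (Fin n)) : ℕ :=
  (univ.filter fun i => ¬ i = σ i ∧ G.Adj i (σ i)).card

lemma rep : bivPermPoly G
    = ∑ σ : Equiv.Perm (Fin n),
        (MvPolynomial.X 0 : MvPolynomial (Fin 2) ℤ) ^ aCt σ * (MvPolynomial.X 1) ^ bCt G σ := by
  unfold bivPermPoly permanent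
  refine Finset.sum_congr rfl fun σ _ => ?_
  have step1 : ∀ i : Fin n,
      ((MvPolynomial.X 0 : MvPolynomial (Fin 2) ℤ) • (1 : Matrix (Fin n) (Fin n) (MvPolynomial (Fin 2) ℤ))
        + (MvPolynomial.X 1 : MvPolynomial (Fin 2) ℤ) • G.adjMatrix (MvPolynomial (Fin 2) ℤ)
        + Gᶜ.adjMatrix (MvPolynomial (Fin 2) ℤ)) i (σ i)
      = if i = σ i then MvPolynomial.X 0 else
          if G.Adj i (σ i) then MvPolynomial.X 1 else 1 := by
    intro i
    by_cases hij : i = σ i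
    · rw [if_pos hij]
      nth_rewrite 1 [hij]
      simp [Matrix.add_apply, Matrix.smul_apply, Matrix.one_apply, ← hij,
        SimpleGraph.adjMatrix_apply]
    · rw [if_neg hij]
      by_cases hadj : G.Adj i (σ i)
      · rw [if_pos hadj]
        simp [Matrix.add_apply, Matrix.smul_apply, Matrix.one_apply, hij, hadj,
          SimpleGraph.adjMatrix_apply, SimpleGraph.compl_adj]
      · rw [if_neg hadj]
        simp [Matrix.add_apply, Matrix.smul_apply, Matrix.one_apply, hij, hadj,
          SimpleGraph.adjMatrix_apply, SimpleGraph.compl_adj]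
  rw [Finset.prod_congr rfl (fun i _ => step1 i)]
  rw [← Finset.prod_filter_mul_prod_filter_not univ (fun i => i = σ i)]
  have h2 : ∏ i ∈ univ.filter (fun i => i = σ i),
      (if i = σ i then (MvPolynomial.X 0 : MvPolynomial (Fin 2) ℤ) else if G.Adj i (σ i) then MvPolynomial.X 1 else 1)
      = (MvPolynomial.X 0 : MvPolynomial (Fin 2) ℤ) ^ aCt σ := by
    rw [Finset.prod_congr rfl (fun i hi => if_pos (Finset.mem_filter.mp hi).2),
      Finset.prod_const]
    rfl
  have h3 : ∏ i ∈ univ.filter (fun i => ¬ i = σ i),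
      (if i = σ i then (MvPolynomial.X 0 : MvPolynomial (Fin 2) ℤ) else if G.Adj i (σ i) then MvPolynomial.X 1 else 1)
      = (MvPolynomial.X 1 : MvPolynomial (Fin 2) ℤ) ^ bCt G σ := by
    rw [Finset.prod_congr rfl (fun i hi => if_neg (Finset.mem_filter.mp hi).2)]
    rw [← Finset.prod_filter_mul_prod_filter_not (univ.filter (fun i => ¬ i = σ i))
      (fun i => G.Adj i (σ i))]
    have h4 : ∏ i ∈ (univ.filter (fun i => ¬ i = σ i)).filter (fun i => G.Adj i (σ i)),
        (if G.Adj i (σ i) then (MvPolynomial.X 1 : MvPolynomial (Fin 2) ℤ) else 1)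
        = (MvPolynomial.X 1 : MvPolynomial (Fin 2) ℤ) ^ bCt G σ := by
      rw [Finset.prod_congr rfl (fun i hi => if_pos (Finset.mem_filter.mp hi).2),
        Finset.prod_const]
      congr 1
      rw [Finset.filter_filter]
      rfl
    have h5 : ∏ i ∈ (univ.filter (fun i => ¬ i = σ i)).filter (fun i => ¬ G.Adj i (σ i)),
        (if G.Adj i (σ i) then (MvPolynomial.X 1 : MvPolynomial (Fin 2) ℤ) else 1) = 1 := by
      rw [Finset.prod_congr rfl (fun i hi => if_neg (Finset.mem_filter.mp hi).2)]
      exact Finset.prod_const_one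
    rw [h4, h5, mul_one]
  rw [h2, h3]

end BivAux

namespace BivAux
variable {n : ℕ} (G : SimpleGraph (Fin n))

noncomputable def eCt (σ : Equiv.Perm (Fin n)) : ℕ := 16 * aCt σ + bCt G σ

noncomputable def cCt (k : ℕ) : ℕ :=
  (univ.filter fun σ : Equiv.Perm (Fin n) => eCt G σ = k).card

lemma aCt_le (σ : Equiv.Perm (Fin n)) : aCt σ ≤ n :=
  le_trans (Finset.card_filter_le _ _) (by simp)

lemma bCt_le (σ : Equiv.Perm (Fin n)) : bCt G σ ≤ n :=
  le_trans (Finset.card_filter_le _ _) (by simp)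

lemma eCt_lt (hn : n ≤ 15) (σ : Equiv.Perm (Fin n)) : eCt G σ < 16 * n + 16 := by
  have h1 := aCt_le σ
  have h2 := bCt_le G σ
  unfold eCt
  omega

lemma cCt_le (k : ℕ) : cCt G k ≤ Fintype.card (Equiv.Perm (Fin n)) :=
  le_trans (Finset.card_filter_le _ _) (le_of_eq Finset.card_univ)

lemma sum_fiber (hn : n ≤ 15) {M : Type*} [AddCommMonoid M] (F : ℕ → M) :
    ∑ σ : Equiv.Perm (Fin n), F (eCt G σ) = ∑ k ∈ range (16 * n + 16), cCt G k • F k := by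
  rw [← Finset.sum_fiberwise_of_maps_to (g := fun σ => eCt G σ)
    (t := range (16 * n + 16)) (fun σ _ => Finset.mem_range.mpr (eCt_lt G hn σ))]
  refine Finset.sum_congr rfl fun k _ => ?_
  rw [Finset.sum_congr rfl (fun σ hσ => by rw [(Finset.mem_filter.mp hσ).2]),
    Finset.sum_const]
  rfl

lemma recon (hn : n ≤ 15) : bivPermPoly G
    = ∑ k ∈ range (16 * n + 16), cCt G k •
        ((MvPolynomial.X 0 : MvPolynomial (Fin 2) ℤ) ^ (k / 16) * (MvPolynomial.X 1) ^ (k % 16)) := by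
  rw [rep G, ← sum_fiber G hn]
  refine Finset.sum_congr rfl fun σ _ => ?_
  have h1 : eCt G σ / 16 = aCt σ ∧ eCt G σ % 16 = bCt G σ := by
    have h2 := bCt_le G σ
    unfold eCt
    omega
  rw [h1.1, h1.2]

noncomputable def evPt : Fin 2 → ℤ := fun i => if i = 0 then ((2:ℤ)^22)^16 else (2:ℤ)^22

lemma eval_biv (hn : n ≤ 15) : MvPolynomial.eval (evPt) (bivPermPoly G)
    = ((∑ k ∈ range (16 * n + 16), cCt G k * (2^22:ℕ)^k : ℕ) : ℤ) := by
  rw [rep G, map_sum]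
  have h1 : ∀ σ : Equiv.Perm (Fin n),
      MvPolynomial.eval evPt ((MvPolynomial.X 0 : MvPolynomial (Fin 2) ℤ) ^ aCt σ * (MvPolynomial.X 1) ^ bCt G σ)
      = ((2:ℤ)^22) ^ eCt G σ := by
    intro σ
    rw [map_mul, map_pow, map_pow, MvPolynomial.eval_X, MvPolynomial.eval_X]
    have e0 : evPt 0 = ((2:ℤ)^22)^16 := by simp [evPt]
    have e1 : evPt 1 = (2:ℤ)^22 := by simp [evPt]
    rw [e0, e1, ← pow_mul, ← pow_add]
    rfl
  rw [Finset.sum_congr rfl (fun σ _ => h1 σ), sum_fiber G hn (fun k => ((2:ℤ)^22)^k)]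
  push_cast [nsmul_eq_mul]
  rfl

lemma digits_unique (B : ℕ) : ∀ (m : ℕ) (c d : ℕ → ℕ), (∀ i, i < m → c i < B) →
    (∀ i, i < m → d i < B) →
    (∑ i ∈ range m, c i * B ^ i) = (∑ i ∈ range m, d i * B ^ i) → ∀ i, i < m → c i = d i := by
  intro m
  induction m with
  | zero => intro c d _ _ _ i hi; omega
  | succ m ih =>
    intro c d hc hd hsum i hi
    have hB : 0 < B := lt_of_le_of_lt (Nat.zero_le _) (hc 0 (Nat.succ_pos m))
    have expand : ∀ e : ℕ → ℕ, (∑ j ∈ range (m+1), e j * B ^ j)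
        = e 0 + (∑ j ∈ range m, e (j+1) * B ^ j) * B := by
      intro e
      rw [Finset.sum_range_succ', Finset.sum_mul]
      simp only [pow_succ, pow_zero, mul_one]
      rw [add_comm]
      congr 1
      exact Finset.sum_congr rfl fun j _ => (mul_assoc _ _ _).symm
    rw [expand c, expand d] at hsum
    have h0 : c 0 = d 0 := by
      have hc0 : (c 0 + (∑ j ∈ range m, c (j+1) * B ^ j) * B) % B = c 0 :=
        by rw [Nat.add_mul_mod_self_right, Nat.mod_eq_of_lt (hc 0 (Nat.succ_pos m))]
      have hd0 : (d 0 + (∑ j ∈ range m, d (j+1) * B ^ j) * B) % B = d 0 :=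
        by rw [Nat.add_mul_mod_self_right, Nat.mod_eq_of_lt (hd 0 (Nat.succ_pos m))]
      rw [← hc0, ← hd0, hsum]
    have htail : (∑ j ∈ range m, c (j+1) * B ^ j) = (∑ j ∈ range m, d (j+1) * B ^ j) := by
      have hcq : (c 0 + (∑ j ∈ range m, c (j+1) * B ^ j) * B) / B
          = ∑ j ∈ range m, c (j+1) * B ^ j := by
        rw [Nat.add_mul_div_right _ _ hB, Nat.div_eq_of_lt (hc 0 (Nat.succ_pos m))]
        omega
      have hdq : (d 0 + (∑ j ∈ range m, d (j+1) * B ^ j) * B) / B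
          = ∑ j ∈ range m, d (j+1) * B ^ j := by
        rw [Nat.add_mul_div_right _ _ hB, Nat.div_eq_of_lt (hd 0 (Nat.succ_pos m))]
        omega
      rw [← hcq, ← hdq, hsum]
    rcases Nat.eq_zero_or_pos i with h | h
    · subst h; exact h0
    · obtain ⟨i', rfl⟩ : ∃ i', i = i' + 1 := ⟨i - 1, by omega⟩
      exact ih (fun j => c (j+1)) (fun j => d (j+1)) (fun j hj => hc (j+1) (by omega))
        (fun j hj => hd (j+1) (by omega)) htail i' (by omega)

theorem biv_eq_of_eval_eq (G H : SimpleGraph (Fin n)) (hn : n ≤ 15)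
    (hcard : Fintype.card (Equiv.Perm (Fin n)) < 2^22)
    (hev : MvPolynomial.eval evPt (bivPermPoly G) = MvPolynomial.eval evPt (bivPermPoly H)) :
    bivPermPoly G = bivPermPoly H := by
  have hnat : (∑ k ∈ range (16 * n + 16), cCt G k * (2^22:ℕ)^k)
      = (∑ k ∈ range (16 * n + 16), cCt H k * (2^22:ℕ)^k) := by
    have := hev
    rw [eval_biv G hn, eval_biv H hn] at this
    exact_mod_cast this
  have hc : ∀ k, k < 16 * n + 16 → cCt G k = cCt H k :=
    digits_unique (2^22) (16 * n + 16) (cCt G) (cCt H)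
      (fun i _ => lt_of_le_of_lt (cCt_le G i) hcard)
      (fun i _ => lt_of_le_of_lt (cCt_le H i) hcard) hnat
  rw [recon G hn, recon H hn]
  exact Finset.sum_congr rfl fun k hk => by rw [hc k (Finset.mem_range.mp hk)]

end BivAux

namespace CoPerm
open BivAux

def gRows : List ℕ := [30, 37, 67, 49, 137, 10, 260, 272, 192, 0]
def hRows : List ℕ := [30, 13, 35, 67, 385, 132, 264, 48, 80, 0]
def gB (i j : Fin 10) : Bool := (gRows.getD i.val 0).testBit j.val
def hB (i j : Fin 10) : Bool := (hRows.getD i.val 0).testBit j.val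

def GG : SimpleGraph (Fin 10) where
  Adj i j := gB i j = true
  symm := ⟨fun i j h => (by decide : ∀ i j : Fin 10, gB i j = true → gB j i = true) i j h⟩
  loopless := ⟨fun i h => (by decide : ∀ i : Fin 10, ¬ gB i i = true) i h⟩

def HH : SimpleGraph (Fin 10) where
  Adj i j := hB i j = true
  symm := ⟨fun i j h => (by decide : ∀ i j : Fin 10, hB i j = true → hB j i = true) i j h⟩
  loopless := ⟨fun i h => (by decide : ∀ i : Fin 10, ¬ hB i i = true) i h⟩

def entInt (f : Fin 10 → Fin 10 → Bool) (i j : Fin 10) : ℤ :=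
  if i = j then ((2:ℤ)^22)^16 else if f i j then (2:ℤ)^22 else 1

lemma eval_biv_eq_perm (G : SimpleGraph (Fin 10)) (f : Fin 10 → Fin 10 → Bool)
    (hf : ∀ i j, G.Adj i j ↔ f i j = true) :
    MvPolynomial.eval evPt (bivPermPoly G) = permanent (fun i j => entInt f i j) := by
  unfold bivPermPoly
  rw [permanent_map (MvPolynomial.eval evPt)]
  congr 1
  funext i j
  by_cases hij : i = j
  · subst hij
    simp [entInt, Matrix.add_apply, Matrix.smul_apply, Matrix.one_apply,
      SimpleGraph.adjMatrix_apply, BivAux.evPt, smul_eq_mul]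
  · by_cases hadj : G.Adj i j
    · have hfij : f i j = true := (hf i j).mp hadj
      simp [entInt, Matrix.add_apply, Matrix.smul_apply, Matrix.one_apply, hij, hadj, hfij,
        SimpleGraph.adjMatrix_apply, SimpleGraph.compl_adj, BivAux.evPt, smul_eq_mul]
    · have hfij : ¬ f i j = true := fun h => hadj ((hf i j).mpr h)
      simp [entInt, Matrix.add_apply, Matrix.smul_apply, Matrix.one_apply, hij, hadj, hfij,
        SimpleGraph.adjMatrix_apply, SimpleGraph.compl_adj, BivAux.evPt, smul_eq_mul]

def FF (f : Fin 10 → Fin 10 → Bool) (S : Finset (Fin 10)) : ℤ :=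
  (-1:ℤ)^(10 - S.card) * ∏ i, ∑ j ∈ S, entInt f i j

def tot (f : Fin 10 → Fin 10 → Bool) : List (Fin 10) → Finset (Fin 10) → ℤ
  | [], acc => FF f acc
  | a :: l, acc => tot f l acc + tot f l (insert a acc)

lemma tot_eq (f : Fin 10 → Fin 10 → Bool) : ∀ (l : List (Fin 10)) (acc : Finset (Fin 10)),
    l.Nodup → (∀ a ∈ l, a ∉ acc) →
    tot f l acc = ∑ S ∈ l.toFinset.powerset, FF f (S ∪ acc) := by
  intro l
  induction l with
  | nil =>
    intro acc _ _
    simp [tot]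
  | cons a l ih =>
    intro acc hnd hacc
    have hal : a ∉ l := (List.nodup_cons.mp hnd).1
    have hnd' : l.Nodup := (List.nodup_cons.mp hnd).2
    have h1 : tot f (a :: l) acc = tot f l acc + tot f l (insert a acc) := rfl
    rw [h1, ih acc hnd' (fun b hb => hacc b (List.mem_cons_of_mem a hb)),
      ih (insert a acc) hnd' (fun b hb => by
        intro hmem
        rcases Finset.mem_insert.mp hmem with h | h
        · exact hal (h ▸ hb)
        · exact hacc b (List.mem_cons_of_mem a hb) h)]
    have h2 : (a :: l).toFinset = insert a l.toFinset := List.toFinset_cons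
    rw [h2, Finset.sum_powerset_insert (by simpa using hal)]
    congr 1
    refine Finset.sum_congr rfl fun S _ => ?_
    rw [Finset.union_insert, Finset.insert_union]

lemma perm_eq_tot (f : Fin 10 → Fin 10 → Bool) :
    permanent (fun i j => entInt f i j) = tot f [0,1,2,3,4,5,6,7,8,9] ∅ := by
  refine (permanent_ryser _).trans ?_
  rw [tot_eq f [0,1,2,3,4,5,6,7,8,9] ∅ (by decide) (fun a _ => Finset.notMem_empty a)]
  have h1 : ([0,1,2,3,4,5,6,7,8,9] : List (Fin 10)).toFinset = Finset.univ := by decide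
  rw [h1]
  refine Finset.sum_congr rfl fun S _ => ?_
  rw [Finset.union_empty]
  rfl

end CoPerm

namespace CoPerm

set_option maxRecDepth 8000 in
lemma tot_eq_tot : tot gB [0,1,2,3,4,5,6,7,8,9] ∅ = tot hB [0,1,2,3,4,5,6,7,8,9] ∅ := by
  decide

def q (f : Fin 10 → Fin 10 → Bool) (a b c d : Fin 10) : Bool :=
  f a b && f b c && f c d && f d a && !f a c && !f b d && (a != c) && (b != d)

def cnt (f : Fin 10 → Fin 10 → Bool) : ℕ :=
  ∑ a : Fin 10, ∑ b : Fin 10, ∑ c : Fin 10, ∑ d : Fin 10, (if q f a b c d then 1 else 0)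

lemma cnt_invariant (G H : SimpleGraph (Fin 10)) (f g : Fin 10 → Fin 10 → Bool)
    (hf : ∀ i j, G.Adj i j ↔ f i j = true) (hg : ∀ i j, H.Adj i j ↔ g i j = true)
    (φ : G ≃g H) : cnt f = cnt g := by
  have hftog : ∀ a b : Fin 10, f a b = g (φ a) (φ b) := by
    intro a b
    have h1 : H.Adj (φ a) (φ b) ↔ G.Adj a b := φ.map_adj_iff
    rw [hf, hg] at h1
    cases hfa : f a b <;> cases hga : g (φ a) (φ b) <;> simp_all
  have hne : ∀ a b : Fin 10, (a != b) = (φ a != φ b) := by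
    intro a b
    by_cases hab : a = b
    · simp [hab]
    · have hne2 : ¬ φ a = φ b := fun h => hab (φ.toEquiv.injective h)
      exact Bool.eq_iff_iff.mpr (by simp [bne_iff_ne, hab, hne2])
  have hQ : ∀ a b c d : Fin 10, q f a b c d = q g (φ a) (φ b) (φ c) (φ d) := by
    intro a b c d
    unfold q
    rw [hftog a b, hftog b c, hftog c d, hftog d a, hftog a c, hftog b d, hne a c, hne b d]
  unfold cnt
  refine Fintype.sum_equiv φ.toEquiv _ _ fun a => ?_
  refine Fintype.sum_equiv φ.toEquiv _ _ fun b => ?_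
  refine Fintype.sum_equiv φ.toEquiv _ _ fun c => ?_
  refine Fintype.sum_equiv φ.toEquiv _ _ fun d => ?_
  rw [hQ a b c d]
  rfl

lemma cnt_ne : ¬ cnt gB = cnt hB := by decide

end CoPerm


/-- There exist two non-isomorphic simple graphs on 10 vertices with the same
bivariate permanent polynomial. -/
theorem exists_copermanent_nonisomorphic_on_ten_vertices :
    ∃ G H : SimpleGraph (Fin 10),
      ¬ Nonempty (G ≃g H) ∧ bivPermPoly G = bivPermPoly H := by
  refine ⟨CoPerm.GG, CoPerm.HH, ?_, ?_⟩
  · rintro ⟨φ⟩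
    exact CoPerm.cnt_ne
      (CoPerm.cnt_invariant CoPerm.GG CoPerm.HH CoPerm.gB CoPerm.hB
        (fun _ _ => Iff.rfl) (fun _ _ => Iff.rfl) φ)
  · refine BivAux.biv_eq_of_eval_eq CoPerm.GG CoPerm.HH (by norm_num) ?_ ?_
    · rw [Fintype.card_perm, Fintype.card_fin]
      norm_num [Nat.factorial]
    · rw [CoPerm.eval_biv_eq_perm CoPerm.GG CoPerm.gB (fun _ _ => Iff.rfl),
        CoPerm.eval_biv_eq_perm CoPerm.HH CoPerm.hB (fun _ _ => Iff.rfl),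
        CoPerm.perm_eq_tot, CoPerm.perm_eq_tot, CoPerm.tot_eq_tot]
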